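/- For all integers t ≥ 1 and δ with δ ≥ 2t + 1 (so that t < (δ+1)/2), there exists a connected finite simple graph G with minimum degree δ and minimum degree-sum σ₂(G) = 2(δ + 1), together with a maximal clique K of size k = δ − 2t + 1 all of whose vertices have degree exactly δ in G, such that some connected component G_i of the induced subgraph G − K contains two distinct nonadjacent vertices whose degree-sum in G_i equals 4t, and 4t < σ₂(G) − 2(k − 1) = 4t + 2. In particular, the claim that every pair of nonadjacent vertices of a component G_i of G − K has degree-sum at least σ₂(G) − 2(k − 1) in G_i is false. -/

import Mathlib

open scoped Classical

/-- The minimum degree-sum `σ₂(G) = min {d_G(u) + d_G(v) : u ≠ v, uv ∉ E(G)}`. -/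
noncomputable def minDegreeSum {V : Type*} [Fintype V] (G : SimpleGraph V) : ℕ :=
  sInf {s | ∃ u v : V, u ≠ v ∧ ¬ G.Adj u v ∧ G.degree u + G.degree v = s}

set_option maxHeartbeats 1000000

open Finset
def f6 (k t : ℕ) (x y : ℕ) : Prop :=
  (x < k ∧ y < k) ∨ (x < k ∧ k ≤ y ∧ y < k + 2*t) ∨
  (k ≤ x ∧ x < k + 2*t ∧ k + 2*t ≤ y ∧ y < k + 4*t) ∨ (k + 2*t ≤ x ∧ k + 2*t ≤ y)

def G6 (k t N : ℕ) : SimpleGraph (Fin N) where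
  Adj x y := x ≠ y ∧ (f6 k t x.val y.val ∨ f6 k t y.val x.val)
  symm := ⟨by rintro x y ⟨h1, h2⟩; exact ⟨h1.symm, h2.symm⟩⟩
  loopless := ⟨by rintro x ⟨h, -⟩; exact h rfl⟩

lemma G6_adj {k t N : ℕ} {x y : Fin N} :
    (G6 k t N).Adj x y ↔ x ≠ y ∧ (f6 k t x.val y.val ∨ f6 k t y.val x.val) := Iff.rfl

lemma card_filter_val {N : ℕ} (p : ℕ → Prop) [DecidablePred p] :
    (Finset.univ.filter (fun x : Fin N => p x.val)).card
      = ((Finset.range N).filter p).card := by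
  apply Finset.card_bij (fun x _ => x.val)
  · intro a ha
    simp only [Finset.mem_filter, Finset.mem_univ, true_and] at ha
    simp only [Finset.mem_filter, Finset.mem_range]
    exact ⟨a.isLt, ha⟩
  · intro a _ b _ h; exact Fin.val_injective h
  · intro b hb
    simp only [Finset.mem_filter, Finset.mem_range] at hb
    exact ⟨⟨b, hb.1⟩, by simp [hb.2], rfl⟩

lemma degree_eq_of_adj_iff {N : ℕ} (G : SimpleGraph (Fin N)) (v : Fin N) (p : ℕ → Prop)
    [DecidablePred p] (h : ∀ y, G.Adj v y ↔ p y.val) :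
    G.degree v = ((Finset.range N).filter p).card := by
  classical
  have hn : G.neighborFinset v = Finset.univ.filter (fun y : Fin N => p y.val) := by
    ext y
    simp [SimpleGraph.mem_neighborFinset, h]
  rw [SimpleGraph.degree, hn, card_filter_val]

lemma induce_degree_eq {N : ℕ} (G : SimpleGraph (Fin N)) (s : Set (Fin N)) (u : s)
    (p : ℕ → Prop) [DecidablePred p]
    (h : ∀ y : Fin N, (y ∈ s ∧ G.Adj u.val y) ↔ p y.val) :
    (G.induce s).degree u = ((Finset.range N).filter p).card := by
  classical
  rw [SimpleGraph.degree]
  apply Finset.card_bij (fun (y : s) _ => (y : Fin N).val)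
  · intro a ha
    rw [SimpleGraph.mem_neighborFinset] at ha
    have hadj : G.Adj u.val a.val := ha
    simp only [Finset.mem_filter, Finset.mem_range]
    exact ⟨(a : Fin N).isLt, (h a).1 ⟨a.2, hadj⟩⟩
  · intro a _ b _ hab
    exact Subtype.ext (Fin.val_injective hab)
  · intro b hb
    simp only [Finset.mem_filter, Finset.mem_range] at hb
    have hx := (h ⟨b, hb.1⟩).2 hb.2
    refine ⟨⟨⟨b, hb.1⟩, hx.1⟩, ?_, rfl⟩
    rw [SimpleGraph.mem_neighborFinset]
    exact hx.2

/-- For all integers `t ≥ 1` and `δ ≥ 2t + 1`, there is a connected finite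
simple graph `G` with minimum degree `δ` and minimum degree-sum `σ₂(G) = 2(δ + 1)`,
together with a maximal clique `K` of size `k = δ - 2t + 1` all of whose vertices have
degree exactly `δ`, such that some connected component `G_i` of `G - K` contains two
distinct nonadjacent vertices whose degree-sum in `G_i` equals `4t`, and
`4t < σ₂(G) - 2(k - 1) = 4t + 2`. -/
theorem exists_counterexample_to_schiermeyer_claim
    (t δ : ℕ) (ht : 1 ≤ t) (hδ : 2 * t + 1 ≤ δ) :
    ∃ (n : ℕ) (G : SimpleGraph (Fin (n + 1))) (K : Finset (Fin (n + 1))),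
      G.Connected ∧
      G.minDegree = δ ∧
      minDegreeSum G = 2 * (δ + 1) ∧
      G.IsClique (K : Set (Fin (n + 1))) ∧
      K.card = δ - 2 * t + 1 ∧
      (∀ v ∈ K, G.degree v = δ) ∧
      (∀ v ∉ K, G.degree v = δ → ¬ ∀ u ∈ K, G.Adj v u) ∧
      ∃ (S : Set (Fin (n + 1)))
        (C : (G.induce {x : Fin (n + 1) | x ∉ K}).ConnectedComponent),
        S = Subtype.val '' C.supp ∧
        ∃ u v : S, u ≠ v ∧ ¬ (G.induce S).Adj u v ∧
          (G.induce S).degree u + (G.induce S).degree v = 4 * t ∧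
          (4 * t : ℤ) < (minDegreeSum G : ℤ) - 2 * ((K.card : ℤ) - 1) ∧
          (minDegreeSum G : ℤ) - 2 * ((K.card : ℤ) - 1) = 4 * t + 2 := by
  set k : ℕ := δ - 2 * t + 1 with hkdef
  have hk2 : 2 ≤ k := by omega
  have hkd : k + 2 * t = δ + 1 := by omega
  -- number of vertices: n + 1 = k + 2t + (δ + 3)
  set n : ℕ := k + 2 * t + δ + 2 with hndef
  set G : SimpleGraph (Fin (n + 1)) := G6 k t (n + 1) with hGdef
  set KF : Finset (Fin (n + 1)) := Finset.univ.filter (fun x => x.val < k) with hKFdef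
  -- degree classification
  have hclass : ∀ x : Fin (n + 1),
      (x.val < k ∧ G.degree x = δ) ∨
      (k ≤ x.val ∧ x.val < k + 2*t ∧ G.degree x = δ + 1) ∨
      (k + 2*t ≤ x.val ∧ x.val < k + 4*t ∧ G.degree x = δ + 2 + 2*t) ∨
      (k + 4*t ≤ x.val ∧ G.degree x = δ + 2) := by
    intro x
    rcases lt_or_ge x.val k with h1 | h1
    · left
      refine ⟨h1, ?_⟩
      rw [degree_eq_of_adj_iff G x (fun m => m ≠ x.val ∧ m < k + 2*t) ?_]
      · have he : (Finset.range (n+1)).filter (fun m => m ≠ x.val ∧ m < k + 2*t)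
            = (Finset.range (k + 2*t)).erase x.val := by
          ext m; simp only [Finset.mem_filter, Finset.mem_range, Finset.mem_erase]; omega
        rw [he, Finset.card_erase_of_mem (by simp only [Finset.mem_range]; omega),
          Finset.card_range]
        omega
      · intro y
        simp only [hGdef, G6_adj, f6, ne_eq, Fin.ext_iff]
        omega
    · rcases lt_or_ge x.val (k + 2*t) with h2 | h2
      · right; left
        refine ⟨h1, h2, ?_⟩
        rw [degree_eq_of_adj_iff G x (fun m => m < k ∨ (k + 2*t ≤ m ∧ m < k + 4*t)) ?_]
        · have he : (Finset.range (n+1)).filter (fun m => m < k ∨ (k + 2*t ≤ m ∧ m < k + 4*t))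
              = Finset.range k ∪ Finset.Ico (k + 2*t) (k + 4*t) := by
            ext m
            simp only [Finset.mem_filter, Finset.mem_range, Finset.mem_union, Finset.mem_Ico]
            omega
          rw [he, Finset.card_union_of_disjoint (by
            rw [Finset.disjoint_left]
            intro a ha hb
            simp only [Finset.mem_range] at ha
            simp only [Finset.mem_Ico] at hb
            omega)]
          rw [Finset.card_range, Nat.card_Ico]
          omega
        · intro y
          simp only [hGdef, G6_adj, f6, ne_eq, Fin.ext_iff]
          omega
      · rcases lt_or_ge x.val (k + 4*t) with h3 | h3
        · right; right; left
          refine ⟨h2, h3, ?_⟩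
          rw [degree_eq_of_adj_iff G x (fun m => m ≠ x.val ∧ k ≤ m) ?_]
          · have he : (Finset.range (n+1)).filter (fun m => m ≠ x.val ∧ k ≤ m)
                = (Finset.Ico k (n+1)).erase x.val := by
              ext m; simp only [Finset.mem_filter, Finset.mem_range, Finset.mem_erase,
                Finset.mem_Ico]; omega
            rw [he, Finset.card_erase_of_mem (by
              simp only [Finset.mem_Ico]; exact ⟨by omega, x.isLt⟩), Nat.card_Ico]
            omega
          · intro y
            simp only [hGdef, G6_adj, f6, ne_eq, Fin.ext_iff]
            omega
        · right; right; right
          refine ⟨h3, ?_⟩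
          rw [degree_eq_of_adj_iff G x (fun m => m ≠ x.val ∧ k + 2*t ≤ m) ?_]
          · have he : (Finset.range (n+1)).filter (fun m => m ≠ x.val ∧ k + 2*t ≤ m)
                = (Finset.Ico (k + 2*t) (n+1)).erase x.val := by
              ext m; simp only [Finset.mem_filter, Finset.mem_range, Finset.mem_erase,
                Finset.mem_Ico]; omega
            rw [he, Finset.card_erase_of_mem (by
              simp only [Finset.mem_Ico]; exact ⟨by omega, x.isLt⟩), Nat.card_Ico]
            omega
          · intro y
            simp only [hGdef, G6_adj, f6, ne_eq, Fin.ext_iff]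
            omega
  -- special vertices
  have hkN : k < n + 1 := by omega
  have hk1N : k + 1 < n + 1 := by omega
  have haN : k + 2*t < n + 1 := by omega
  set u0 : Fin (n + 1) := ⟨k, hkN⟩ with hu0
  set v0 : Fin (n + 1) := ⟨k + 1, hk1N⟩ with hv0
  set a0 : Fin (n + 1) := ⟨k + 2*t, haN⟩ with ha0
  have hu0v : u0.val = k := rfl
  have hv0v : v0.val = k + 1 := rfl
  have ha0v : a0.val = k + 2*t := rfl
  -- σ₂ witness pair
  have hne0 : u0 ≠ v0 := by simp [hu0, hv0, Fin.ext_iff]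
  have hnadj0 : ¬ G.Adj u0 v0 := by
    rintro ⟨-, h | h⟩ <;> (simp only [f6, hu0v, hv0v] at h; omega)
  have hsum0 : G.degree u0 + G.degree v0 = 2 * (δ + 1) := by
    have h1 := hclass u0
    have h2 := hclass v0
    rw [hu0v] at h1
    rw [hv0v] at h2
    omega
  have hmem0 : 2 * (δ + 1) ∈
      {s | ∃ u v : Fin (n+1), u ≠ v ∧ ¬ G.Adj u v ∧ G.degree u + G.degree v = s} :=
    ⟨u0, v0, hne0, hnadj0, hsum0⟩
  -- σ₂
  have hσ : minDegreeSum G = 2 * (δ + 1) := by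
    apply le_antisymm
    · exact Nat.sInf_le hmem0
    · apply le_csInf ⟨2 * (δ + 1), hmem0⟩
      rintro s ⟨u, v, hne, hnadj, hsum⟩
      have hval : u.val ≠ v.val := fun h => hne (Fin.ext h)
      have hnf : ¬ f6 k t u.val v.val ∧ ¬ f6 k t v.val u.val := by
        rw [hGdef, G6_adj, not_and, not_or] at hnadj
        exact hnadj hne
      simp only [f6] at hnf
      have h1 := hclass u
      have h2 := hclass v
      omega
  -- minDegree
  have hmin : G.minDegree = δ := by
    apply le_antisymm
    · have h1 := hclass ⟨0, by omega⟩
      have h0 : (⟨0, by omega⟩ : Fin (n+1)).val = 0 := rfl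
      rw [h0] at h1
      have h2 := G.minDegree_le_degree ⟨0, by omega⟩
      omega
    · apply SimpleGraph.le_minDegree_of_forall_le_degree
      intro v
      have := hclass v
      omega
  -- clique facts
  have hKmem : ∀ x : Fin (n + 1), x ∈ KF ↔ x.val < k := by
    intro x; simp [hKFdef]
  have hKcard : KF.card = δ - 2 * t + 1 := by
    rw [hKFdef, card_filter_val (N := n+1) (p := fun m => m < k)]
    have he : (Finset.range (n+1)).filter (fun m => m < k) = Finset.range k := by
      ext m; simp only [Finset.mem_filter, Finset.mem_range]; omega
    rw [he, Finset.card_range]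
  refine ⟨n, G, KF, ?_, hmin, hσ, ?_, hKcard, ?_, ?_, ?_⟩
  -- Connected
  · have hadj_a0u0 : G.Adj a0 u0 := by
      rw [hGdef, G6_adj]
      refine ⟨by simp [ha0, hu0, Fin.ext_iff]; omega, Or.inr ?_⟩
      simp only [f6, ha0v, hu0v]
      omega
    have hreach : ∀ x : Fin (n + 1), G.Reachable x u0 := by
      intro x
      rcases lt_or_ge x.val k with h1 | h1
      · refine SimpleGraph.Adj.reachable ?_
        rw [hGdef, G6_adj]
        exact ⟨fun h => by rw [Fin.ext_iff, hu0v] at h; omega,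
           Or.inl (by simp only [f6, hu0v]; omega)⟩
      · rcases eq_or_ne x u0 with rfl | hxu
        · exact SimpleGraph.Reachable.refl _
        · rcases eq_or_ne x a0 with rfl | hxa
          · exact hadj_a0u0.reachable
          · have hxune : x.val ≠ k := fun h => hxu (Fin.ext (by rw [hu0v]; exact h))
            have hxane : x.val ≠ k + 2*t := fun h => hxa (Fin.ext (by rw [ha0v]; exact h))
            have hadj : G.Adj x a0 := by
              rw [hGdef, G6_adj]
              refine ⟨hxa, ?_⟩
              rcases lt_or_ge x.val (k + 2*t) with h2 | h2
              · exact Or.inl (by simp only [f6, ha0v]; omega)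
              · exact Or.inl (by simp only [f6, ha0v]; omega)
            exact hadj.reachable.trans hadj_a0u0.reachable
    rw [SimpleGraph.connected_iff_exists_forall_reachable]
    exact ⟨u0, fun w => (hreach w).symm⟩
  -- IsClique
  · intro x hx y hy hxy
    rw [Finset.mem_coe, hKmem] at hx hy
    rw [hGdef, G6_adj]
    exact ⟨hxy, Or.inl (by simp only [f6]; omega)⟩
  -- degrees in K
  · intro v hv
    rw [hKmem] at hv
    have := hclass v
    omega
  -- maximality (vacuous)
  · intro v hv hdv
    rw [hKmem] at hv
    have := hclass v
    omega
  -- component part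
  · have hSmem : ∀ x : Fin (n + 1), x ∈ {x : Fin (n + 1) | x ∉ KF} ↔ k ≤ x.val := by
      intro x
      rw [Set.mem_setOf_eq, hKmem]
      omega
    set Sset : Set (Fin (n + 1)) := {x : Fin (n + 1) | x ∉ KF} with hSdef
    have ha0S : a0 ∈ Sset := (hSmem a0).2 (by rw [ha0v]; omega)
    have hu0S : u0 ∈ Sset := (hSmem u0).2 (by rw [hu0v])
    have hv0S : v0 ∈ Sset := (hSmem v0).2 (by rw [hv0v]; omega)
    set hub : Sset := ⟨a0, ha0S⟩ with hhub
    -- reachability within the induced graph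
    have hreach : ∀ x : Sset, (G.induce Sset).Reachable x hub := by
      rintro ⟨x, hxS⟩
      have hxk : k ≤ x.val := (hSmem x).1 hxS
      rcases eq_or_ne x a0 with rfl | hxa
      · exact SimpleGraph.Reachable.refl _
      · have hxane : x.val ≠ k + 2*t := fun h => hxa (Fin.ext (by rw [ha0v]; exact h))
        refine SimpleGraph.Adj.reachable ?_
        show G.Adj x a0
        rw [hGdef, G6_adj]
        refine ⟨hxa, Or.inl ?_⟩
        simp only [f6, ha0v]
        omega
    refine ⟨Sset, (G.induce Sset).connectedComponentMk hub, ?_, ?_⟩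
    · have hsupp : ((G.induce Sset).connectedComponentMk hub).supp = Set.univ := by
        apply Set.eq_univ_of_forall
        intro x
        rw [SimpleGraph.ConnectedComponent.mem_supp_iff]
        exact SimpleGraph.ConnectedComponent.sound (hreach x)
      rw [hsupp, Set.image_univ, Subtype.range_coe]
    · set us : Sset := ⟨u0, hu0S⟩ with hus
      set vs : Sset := ⟨v0, hv0S⟩ with hvs
      have hadj2 : ∀ (w : Fin (n+1)), w.val = k ∨ w.val = k + 1 →
          ∀ y : Fin (n+1), (y ∈ Sset ∧ G.Adj w y) ↔ (k + 2*t ≤ y.val ∧ y.val < k + 4*t) := by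
        intro w hw y
        rw [hSmem y, hGdef, G6_adj]
        constructor
        · rintro ⟨hy, -, hf | hf⟩ <;> (simp only [f6] at hf; omega)
        · rintro ⟨hy1, hy2⟩
          refine ⟨by omega, fun h => ?_, Or.inl ?_⟩
          · rw [Fin.ext_iff] at h; omega
          · simp only [f6]; omega
      have he : (Finset.range (n+1)).filter (fun m => k + 2*t ≤ m ∧ m < k + 4*t)
          = Finset.Ico (k + 2*t) (k + 4*t) := by
        ext m; simp only [Finset.mem_filter, Finset.mem_range, Finset.mem_Ico]; omega
      refine ⟨us, vs, ?_, ?_, ?_, ?_, ?_⟩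
      · intro h
        exact hne0 (Subtype.ext_iff.mp h)
      · intro h
        exact hnadj0 h
      · rw [induce_degree_eq G Sset us (fun m => k + 2*t ≤ m ∧ m < k + 4*t)
              (hadj2 u0 (Or.inl rfl)),
            induce_degree_eq G Sset vs (fun m => k + 2*t ≤ m ∧ m < k + 4*t)
              (hadj2 v0 (Or.inr rfl)),
            he, Nat.card_Ico]
        omega
      · rw [hσ, hKcard]
        omega
      · rw [hσ, hKcard]
        omega
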